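/- Let E ⊆ ℂ^4⊗ℂ^4⊗ℂ^4 be the linear span of the five tensors x^1_2⊗y^2_1⊗z^2_2, x^1_2⊗y^2_2⊗z^2_2, x^2_1⊗y^2_1⊗z^1_2, x^2_1⊗y^2_1⊗z^2_2, and T_{BCLR}. Then E is 5-dimensional, and a nonzero simple tensor a⊗b⊗c (with a,b,c ∈ ℂ^4) lies in E if and only if it has one of the following three forms: (i) x^1_2⊗(λ y^2_1 + μ y^2_2)⊗z^2_2 for some scalars λ, μ (a point of the β-line), (ii) x^2_1⊗y^2_1⊗(λ z^1_2 + μ z^2_2) for some scalars λ, μ (a point of the γ-line), or (iii) (λ x^1_2 + μ x^2_1)⊗y^2_1⊗z^2_2 for some scalars λ, μ (a point of the α-line). In particular, the set of rank-one points of E is the union of exactly three lines on the Segre variety, the α-line being the unique line on the Segre intersecting both of the other two. -/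

import Mathlib

/-- A simple (rank-one) tensor in coordinates: `(u ⊗ v ⊗ w)_{ijk} = u_i v_j w_k`. -/
def simpleTensor {ι₁ ι₂ ι₃ : Type} (u : ι₁ → ℂ) (v : ι₂ → ℂ) (w : ι₃ → ℂ) :
    ι₁ → ι₂ → ι₃ → ℂ :=
  fun i j k => u i * v j * w k

/-- The set of tensors of rank at most `r`: sums of `r` simple tensors. -/
def rankAtMost (ι₁ ι₂ ι₃ : Type) (r : ℕ) : Set (ι₁ → ι₂ → ι₃ → ℂ) :=
  {T | ∃ u : Fin r → ι₁ → ℂ, ∃ v : Fin r → ι₂ → ℂ, ∃ w : Fin r → ι₃ → ℂ,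
    T = ∑ s : Fin r, simpleTensor (u s) (v s) (w s)}

/-- The border rank of a tensor: the least `r` such that `T` lies in the closure of the
set of tensors of rank at most `r`. -/
noncomputable def borderRank {ι₁ ι₂ ι₃ : Type} (T : ι₁ → ι₂ → ι₃ → ℂ) : ℕ :=
  sInf {r : ℕ | T ∈ closure (rankAtMost ι₁ ι₂ ι₃ r)}

/-- The matrix multiplication tensor `M_{⟨n,m,p⟩} = ∑ x^i_j ⊗ y^j_k ⊗ z^k_i`
in coordinates: the first factor is indexed by pairs `(i,j)`, the second by `(j,k)`,
the third by `(k,i)`. -/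
def matMulTensor (n m p : ℕ) :
    (Fin n × Fin m) → (Fin m × Fin p) → (Fin p × Fin n) → ℂ :=
  fun x y z => if x.2 = y.1 ∧ y.2 = z.1 ∧ z.2 = x.1 then 1 else 0

/-- The BCLRS tensor `T_{BCLRS,m} = M_{⟨m,2,2⟩} − x^1_1 ⊗ (y^1_1 ⊗ z^1_1 + y^1_2 ⊗ z^2_1)`
(indices written 1-based in the literature, 0-based here). -/
def TBCLRS (m : ℕ) : (Fin m × Fin 2) → (Fin 2 × Fin 2) → (Fin 2 × Fin m) → ℂ :=
  fun x y z =>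
    matMulTensor m 2 2 x y z -
      (if x.1.val = 0 ∧ x.2.val = 0 then 1 else 0) *
        ((if y.1.val = 0 ∧ y.2.val = 0 then 1 else 0) *
            (if z.1.val = 0 ∧ z.2.val = 0 then 1 else 0) +
          (if y.1.val = 0 ∧ y.2.val = 1 then 1 else 0) *
            (if z.1.val = 1 ∧ z.2.val = 0 then 1 else 0))

/-- The standard basis vector `e_{(i,j)}` of a coordinate space indexed by pairs. -/
def unitVec {α β : Type} [DecidableEq α] [DecidableEq β] (i : α) (j : β) : α × β → ℂ :=
  fun p => if p = (i, j) then 1 else 0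

/-- The 5-plane `E^{BCLR}`: the span of `x^1_2⊗y^2_1⊗z^2_2`, `x^1_2⊗y^2_2⊗z^2_2`,
`x^2_1⊗y^2_1⊗z^1_2`, `x^2_1⊗y^2_1⊗z^2_2` and `T_{BCLR}` (indices 0-based:
`x^i_j = unitVec (i-1) (j-1)`, `y^j_k = unitVec (j-1) (k-1)`, `z^k_i = unitVec (k-1) (i-1)`). -/
noncomputable def EBCLR :
    Submodule ℂ ((Fin 2 × Fin 2) → (Fin 2 × Fin 2) → (Fin 2 × Fin 2) → ℂ) :=
  Submodule.span ℂ
    { simpleTensor (unitVec 0 1) (unitVec 1 0) (unitVec 1 1),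
      simpleTensor (unitVec 0 1) (unitVec 1 1) (unitVec 1 1),
      simpleTensor (unitVec 1 0) (unitVec 1 0) (unitVec 0 1),
      simpleTensor (unitVec 1 0) (unitVec 1 0) (unitVec 1 1),
      TBCLRS 2 }

noncomputable section BCLRaux

def S1 : (Fin 2 × Fin 2) → (Fin 2 × Fin 2) → (Fin 2 × Fin 2) → ℂ :=
  simpleTensor (unitVec 0 1) (unitVec 1 0) (unitVec 1 1)
def S2 : (Fin 2 × Fin 2) → (Fin 2 × Fin 2) → (Fin 2 × Fin 2) → ℂ :=
  simpleTensor (unitVec 0 1) (unitVec 1 1) (unitVec 1 1)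
def S3 : (Fin 2 × Fin 2) → (Fin 2 × Fin 2) → (Fin 2 × Fin 2) → ℂ :=
  simpleTensor (unitVec 1 0) (unitVec 1 0) (unitVec 0 1)
def S4 : (Fin 2 × Fin 2) → (Fin 2 × Fin 2) → (Fin 2 × Fin 2) → ℂ :=
  simpleTensor (unitVec 1 0) (unitVec 1 0) (unitVec 1 1)
def TT : (Fin 2 × Fin 2) → (Fin 2 × Fin 2) → (Fin 2 × Fin 2) → ℂ := TBCLRS 2

lemma EBCLR_eq : EBCLR = Submodule.span ℂ {S1, S2, S3, S4, TT} := rfl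

lemma mem_EBCLR_iff (v : (Fin 2 × Fin 2) → (Fin 2 × Fin 2) → (Fin 2 × Fin 2) → ℂ) :
    v ∈ EBCLR ↔ ∃ c1 c2 c3 c4 c5 : ℂ,
      v = c1 • S1 + c2 • S2 + c3 • S3 + c4 • S4 + c5 • TT := by
  rw [EBCLR_eq]
  constructor
  · intro hv
    rw [Submodule.mem_span_insert] at hv
    obtain ⟨c1, z1, hz1, rfl⟩ := hv
    rw [Submodule.mem_span_insert] at hz1
    obtain ⟨c2, z2, hz2, rfl⟩ := hz1
    rw [Submodule.mem_span_insert] at hz2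
    obtain ⟨c3, z3, hz3, rfl⟩ := hz2
    rw [Submodule.mem_span_insert] at hz3
    obtain ⟨c4, z4, hz4, rfl⟩ := hz3
    rw [Submodule.mem_span_singleton] at hz4
    obtain ⟨c5, rfl⟩ := hz4
    exact ⟨c1, c2, c3, c4, c5, by abel⟩
  · rintro ⟨c1, c2, c3, c4, c5, rfl⟩
    have m1 : S1 ∈ ({S1, S2, S3, S4, TT} : Set _) := Set.mem_insert _ _
    have m2 : S2 ∈ ({S1, S2, S3, S4, TT} : Set _) :=
      Set.mem_insert_of_mem _ (Set.mem_insert _ _)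
    have m3 : S3 ∈ ({S1, S2, S3, S4, TT} : Set _) :=
      Set.mem_insert_of_mem _ (Set.mem_insert_of_mem _ (Set.mem_insert _ _))
    have m4 : S4 ∈ ({S1, S2, S3, S4, TT} : Set _) :=
      Set.mem_insert_of_mem _ (Set.mem_insert_of_mem _ (Set.mem_insert_of_mem _
        (Set.mem_insert _ _)))
    have m5 : TT ∈ ({S1, S2, S3, S4, TT} : Set _) :=
      Set.mem_insert_of_mem _ (Set.mem_insert_of_mem _ (Set.mem_insert_of_mem _
        (Set.mem_insert_of_mem _ rfl)))
    exact add_mem (add_mem (add_mem (add_mem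
      (Submodule.smul_mem _ _ (Submodule.subset_span m1))
      (Submodule.smul_mem _ _ (Submodule.subset_span m2)))
      (Submodule.smul_mem _ _ (Submodule.subset_span m3)))
      (Submodule.smul_mem _ _ (Submodule.subset_span m4)))
      (Submodule.smul_mem _ _ (Submodule.subset_span m5))

lemma exists_ne_coord (v : Fin 2 × Fin 2 → ℂ) (p : Fin 2 × Fin 2) (h : v p ≠ 0) :
    v 0 ≠ 0 ∨ v (0,1) ≠ 0 ∨ v (1,0) ≠ 0 ∨ v 1 ≠ 0 := by
  obtain ⟨i, j⟩ := p
  fin_cases i <;> fin_cases j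
  · exact Or.inl h
  · exact Or.inr (Or.inl h)
  · exact Or.inr (Or.inr (Or.inl h))
  · exact Or.inr (Or.inr (Or.inr h))


lemma form_beta (a b c : Fin 2 × Fin 2 → ℂ)
    (za00 : a 0 = 0) (ha10 : a (1,0) = 0) (za11 : a 1 = 0)
    (zb00 : b 0 = 0) (zb01 : b (0,1) = 0)
    (zc00 : c 0 = 0) (hc01 : c (0,1) = 0) (zc10 : c (1,0) = 0) :
    simpleTensor a b c = simpleTensor (unitVec 0 1)
      ((a (0,1) * b (1,0) * c 1) • unitVec 1 0 +
        (a (0,1) * b 1 * c 1) • unitVec 1 1) (unitVec 1 1) := by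
  funext x y z
  obtain ⟨x1, x2⟩ := x
  obtain ⟨y1, y2⟩ := y
  obtain ⟨z1, z2⟩ := z
  fin_cases x1 <;> fin_cases x2 <;> fin_cases y1 <;> fin_cases y2 <;>
    fin_cases z1 <;> fin_cases z2 <;>
    simp [simpleTensor, unitVec, Prod.ext_iff, za00, ha10, za11, zb00, zb01,
      zc00, hc01, zc10, (show a (0,0) = 0 from za00), (show a (1,1) = 0 from za11),
      (show b (0,0) = 0 from zb00), (show c (0,0) = 0 from zc00),
      (show c (1,1) = c 1 from rfl), (show b (1,1) = b 1 from rfl)]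

lemma form_gamma (a b c : Fin 2 × Fin 2 → ℂ)
    (za00 : a 0 = 0) (ha01 : a (0,1) = 0) (za11 : a 1 = 0)
    (zb00 : b 0 = 0) (zb01 : b (0,1) = 0) (hb11 : b 1 = 0)
    (zc00 : c 0 = 0) (zc10 : c (1,0) = 0) :
    simpleTensor a b c = simpleTensor (unitVec 1 0) (unitVec 1 0)
      ((a (1,0) * b (1,0) * c (0,1)) • unitVec 0 1 +
        (a (1,0) * b (1,0) * c 1) • unitVec 1 1) := by
  funext x y z
  obtain ⟨x1, x2⟩ := x
  obtain ⟨y1, y2⟩ := y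
  obtain ⟨z1, z2⟩ := z
  fin_cases x1 <;> fin_cases x2 <;> fin_cases y1 <;> fin_cases y2 <;>
    fin_cases z1 <;> fin_cases z2 <;>
    simp [simpleTensor, unitVec, Prod.ext_iff, za00, ha01, za11, zb00, zb01,
      hb11, zc00, zc10, (show a (0,0) = 0 from za00), (show a (1,1) = 0 from za11),
      (show b (0,0) = 0 from zb00), (show b (1,1) = 0 from hb11), (show c (0,0) = 0 from zc00),
      (show c (1,1) = c 1 from rfl)]

lemma form_alpha (a b c : Fin 2 × Fin 2 → ℂ)
    (za00 : a 0 = 0) (za11 : a 1 = 0)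
    (zb00 : b 0 = 0) (zb01 : b (0,1) = 0) (hb11 : b 1 = 0)
    (zc00 : c 0 = 0) (hc01 : c (0,1) = 0) (zc10 : c (1,0) = 0) :
    simpleTensor a b c = simpleTensor
      ((a (0,1) * b (1,0) * c 1) • unitVec 0 1 +
        (a (1,0) * b (1,0) * c 1) • unitVec 1 0) (unitVec 1 0) (unitVec 1 1) := by
  funext x y z
  obtain ⟨x1, x2⟩ := x
  obtain ⟨y1, y2⟩ := y
  obtain ⟨z1, z2⟩ := z
  fin_cases x1 <;> fin_cases x2 <;> fin_cases y1 <;> fin_cases y2 <;>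
    fin_cases z1 <;> fin_cases z2 <;>
    simp [simpleTensor, unitVec, Prod.ext_iff, za00, za11, zb00, zb01, hb11,
      zc00, hc01, zc10, (show a (0,0) = 0 from za00), (show a (1,1) = 0 from za11),
      (show b (0,0) = 0 from zb00), (show b (1,1) = 0 from hb11), (show c (0,0) = 0 from zc00),
      (show c (1,1) = c 1 from rfl)]

lemma comb_beta (l m : ℂ) :
    simpleTensor (unitVec 0 1) (l • unitVec 1 0 + m • unitVec 1 1) (unitVec 1 1)
      = l • S1 + m • S2 + (0:ℂ) • S3 + (0:ℂ) • S4 + (0:ℂ) • TT := by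
  funext x y z
  obtain ⟨x1, x2⟩ := x
  obtain ⟨y1, y2⟩ := y
  obtain ⟨z1, z2⟩ := z
  fin_cases x1 <;> fin_cases x2 <;> fin_cases y1 <;> fin_cases y2 <;>
    fin_cases z1 <;> fin_cases z2 <;>
    simp [S1, S2, S3, S4, TT, TBCLRS, matMulTensor, simpleTensor, unitVec,
      Prod.ext_iff]

lemma comb_gamma (l m : ℂ) :
    simpleTensor (unitVec 1 0) (unitVec 1 0) (l • unitVec 0 1 + m • unitVec 1 1)
      = (0:ℂ) • S1 + (0:ℂ) • S2 + l • S3 + m • S4 + (0:ℂ) • TT := by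
  funext x y z
  obtain ⟨x1, x2⟩ := x
  obtain ⟨y1, y2⟩ := y
  obtain ⟨z1, z2⟩ := z
  fin_cases x1 <;> fin_cases x2 <;> fin_cases y1 <;> fin_cases y2 <;>
    fin_cases z1 <;> fin_cases z2 <;>
    simp [S1, S2, S3, S4, TT, TBCLRS, matMulTensor, simpleTensor, unitVec,
      Prod.ext_iff]

lemma comb_alpha (l m : ℂ) :
    simpleTensor (l • unitVec 0 1 + m • unitVec 1 0) (unitVec 1 0) (unitVec 1 1)
      = l • S1 + (0:ℂ) • S2 + (0:ℂ) • S3 + m • S4 + (0:ℂ) • TT := by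
  funext x y z
  obtain ⟨x1, x2⟩ := x
  obtain ⟨y1, y2⟩ := y
  obtain ⟨z1, z2⟩ := z
  fin_cases x1 <;> fin_cases x2 <;> fin_cases y1 <;> fin_cases y2 <;>
    fin_cases z1 <;> fin_cases z2 <;>
    simp [S1, S2, S3, S4, TT, TBCLRS, matMulTensor, simpleTensor, unitVec,
      Prod.ext_iff]

end BCLRaux

/-- `E^{BCLR}` is 5-dimensional and its nonzero simple tensors are exactly the points of
the β-line `x^1_2 ⊗ ⟨y^2_1,y^2_2⟩ ⊗ z^2_2`, the γ-line `x^2_1 ⊗ y^2_1 ⊗ ⟨z^1_2,z^2_2⟩`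
and the α-line `⟨x^1_2,x^2_1⟩ ⊗ y^2_1 ⊗ z^2_2`. -/

theorem EBCLR_rank_one_points :
    Module.finrank ℂ EBCLR = 5 ∧
    ∀ a b c : Fin 2 × Fin 2 → ℂ, simpleTensor a b c ≠ 0 →
      (simpleTensor a b c ∈ EBCLR ↔
        (∃ lam mu : ℂ, simpleTensor a b c =
          simpleTensor (unitVec 0 1) (lam • unitVec 1 0 + mu • unitVec 1 1) (unitVec 1 1)) ∨
        (∃ lam mu : ℂ, simpleTensor a b c =
          simpleTensor (unitVec 1 0) (unitVec 1 0) (lam • unitVec 0 1 + mu • unitVec 1 1)) ∨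
        (∃ lam mu : ℂ, simpleTensor a b c =
          simpleTensor (lam • unitVec 0 1 + mu • unitVec 1 0) (unitVec 1 0) (unitVec 1 1))) := by
  constructor
  · -- dimension count
    have hli : LinearIndependent ℂ ![S1, S2, S3, S4, TT] := by
      rw [Fintype.linearIndependent_iff]
      intro g hg
      rw [Fin.sum_univ_five] at hg
      simp only [Matrix.cons_val_zero, Matrix.cons_val_one, Matrix.head_cons,
        Matrix.cons_val_two, Matrix.tail_cons, Matrix.cons_val_three,
        Matrix.cons_val_four] at hg
      have q1 := congrFun (congrFun (congrFun hg (0,1)) (1,0)) (1,1)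
      have q2 := congrFun (congrFun (congrFun hg (0,1)) (1,1)) (1,1)
      have q3 := congrFun (congrFun (congrFun hg (1,0)) (1,0)) (0,1)
      have q4 := congrFun (congrFun (congrFun hg (1,0)) (1,0)) (1,1)
      have q5 := congrFun (congrFun (congrFun hg (1,1)) (1,1)) (1,1)
      simp [S1, S2, S3, S4, TT, TBCLRS, matMulTensor, simpleTensor, unitVec,
        Prod.ext_iff] at q1 q2 q3 q4 q5
      intro i
      fin_cases i
      · exact q1
      · exact q2
      · exact q3
      · exact q4
      · exact q5
    have hr : ({S1, S2, S3, S4, TT} :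
        Set ((Fin 2 × Fin 2) → (Fin 2 × Fin 2) → (Fin 2 × Fin 2) → ℂ))
        = Set.range ![S1, S2, S3, S4, TT] := by
      ext v
      simp [Matrix.range_cons, Matrix.range_empty]
      tauto
    rw [EBCLR_eq, hr, finrank_span_eq_card hli]
    simp
  · intro a b c hne
    constructor
    · -- forward direction
      intro hmem
      obtain ⟨c1, c2, c3, c4, c5, h⟩ := (mem_EBCLR_iff _).1 hmem
      obtain ⟨x0, y0, z0, hnz⟩ : ∃ x y z, a x * b y * c z ≠ 0 := by
        by_contra hcon
        push_neg at hcon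
        exact hne (by funext x y z; simpa [simpleTensor] using hcon x y z)
      have hax : a x0 ≠ 0 := left_ne_zero_of_mul (left_ne_zero_of_mul hnz)
      have hby : b y0 ≠ 0 := right_ne_zero_of_mul (left_ne_zero_of_mul hnz)
      have hcz : c z0 ≠ 0 := right_ne_zero_of_mul hnz
      -- the coefficient of T_{BCLR} must vanish
      have hc5 : c5 = 0 := by
        have e1 := congrFun (congrFun (congrFun h (0,1)) (1,0)) (0,0)
        have e2 := congrFun (congrFun (congrFun h (1,0)) (0,1)) (1,1)
        have e3 := congrFun (congrFun (congrFun h (0,1)) (0,1)) (1,1)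
        simp [S1, S2, S3, S4, TT, TBCLRS, matMulTensor, simpleTensor, unitVec,
          Prod.ext_iff] at e1 e2 e3
        by_contra hc5
        rcases e3 with (h' | h') | h'
        · exact hc5 (by rw [← e1, h']; ring)
        · exact hc5 (by rw [← e2, h']; ring)
        · exact hc5 (by rw [← e2, h']; ring)
      subst hc5
      rw [zero_smul, add_zero] at h
      -- vanishing coordinates of a, b, c
      have za00 : a 0 = 0 := by
        have e := congrFun (congrFun (congrFun h (0,0)) y0) z0
        simp [S1, S2, S3, S4, simpleTensor, unitVec, Prod.ext_iff] at e
        tauto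
      have za11 : a 1 = 0 := by
        have e := congrFun (congrFun (congrFun h (1,1)) y0) z0
        simp [S1, S2, S3, S4, simpleTensor, unitVec, Prod.ext_iff] at e
        tauto
      have zb00 : b 0 = 0 := by
        have e := congrFun (congrFun (congrFun h x0) (0,0)) z0
        simp [S1, S2, S3, S4, simpleTensor, unitVec, Prod.ext_iff] at e
        tauto
      have zb01 : b (0,1) = 0 := by
        have e := congrFun (congrFun (congrFun h x0) (0,1)) z0
        simp [S1, S2, S3, S4, simpleTensor, unitVec, Prod.ext_iff] at e
        tauto
      have zc00 : c 0 = 0 := by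
        have e := congrFun (congrFun (congrFun h x0) y0) (0,0)
        simp [S1, S2, S3, S4, simpleTensor, unitVec, Prod.ext_iff] at e
        tauto
      have zc10 : c (1,0) = 0 := by
        have e := congrFun (congrFun (congrFun h x0) y0) (1,0)
        simp [S1, S2, S3, S4, simpleTensor, unitVec, Prod.ext_iff] at e
        tauto
      -- the remaining vanishing products
      have r1 := congrFun (congrFun (congrFun h (0,1)) (1,0)) (0,1)
      have r2 := congrFun (congrFun (congrFun h (0,1)) (1,1)) (0,1)
      have r3 := congrFun (congrFun (congrFun h (1,0)) (1,1)) (0,1)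
      have r4 := congrFun (congrFun (congrFun h (1,0)) (1,1)) (1,1)
      simp [S1, S2, S3, S4, simpleTensor, unitVec, Prod.ext_iff] at r1 r2 r3 r4
      by_cases hb11 : b 1 = 0
      · by_cases hc01 : c (0,1) = 0
        · exact Or.inr (Or.inr ⟨a (0,1) * b (1,0) * c 1, a (1,0) * b (1,0) * c 1,
            form_alpha a b c za00 za11 zb00 zb01 hb11 zc00 hc01 zc10⟩)
        · have hb10 : b (1,0) ≠ 0 := by
            rcases exists_ne_coord b y0 hby with h' | h' | h' | h' <;> tauto
          have ha01 : a (0,1) = 0 := by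
            rcases r1 with (h' | h') | h' <;> tauto
          exact Or.inr (Or.inl ⟨a (1,0) * b (1,0) * c (0,1), a (1,0) * b (1,0) * c 1,
            form_gamma a b c za00 ha01 za11 zb00 zb01 hb11 zc00 zc10⟩)
      · by_cases ha10 : a (1,0) = 0
        · have ha01 : a (0,1) ≠ 0 := by
            rcases exists_ne_coord a x0 hax with h' | h' | h' | h' <;> tauto
          have hc01 : c (0,1) = 0 := by
            rcases r2 with (h' | h') | h' <;> tauto
          exact Or.inl ⟨a (0,1) * b (1,0) * c 1, a (0,1) * b 1 * c 1,
            form_beta a b c za00 ha10 za11 zb00 zb01 zc00 hc01 zc10⟩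
        · exfalso
          have hc01 : c (0,1) = 0 := by
            rcases r3 with (h' | h') | h' <;> tauto
          have hc11 : c 1 = 0 := by
            rcases r4 with (h' | h') | h' <;> tauto
          rcases exists_ne_coord c z0 hcz with h' | h' | h' | h' <;> tauto
    · -- backward direction
      rintro (⟨l, m, hf⟩ | ⟨l, m, hf⟩ | ⟨l, m, hf⟩) <;> rw [hf] <;>
        apply (mem_EBCLR_iff _).2
      · exact ⟨l, m, 0, 0, 0, comb_beta l m⟩
      · exact ⟨0, 0, l, m, 0, comb_gamma l m⟩
      · exact ⟨l, 0, 0, m, 0, comb_alpha l m⟩
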